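/- Sandwich property: combining the partition bounds, ln det(Λ + A_sᵀA_s) ≤ ln det(Λ + A_sᵀA_s + A_{s̄}ᵀA_{s̄}) ≤ ln det(Λ + A_sᵀA_s) + ln det(Λ + A_{s̄}ᵀA_{s̄}) - ln det(Λ). -/

import Mathlib

open Matrix

section Aux

variable {m : ℕ}

open scoped MatrixOrder

/-- Transpose-mul-self is PSD over ℝ. -/
lemma aux_posSemidef_transpose_mul_self {k : ℕ} (A : Matrix (Fin k) (Fin m) ℝ) :
    (Aᵀ * A).PosSemidef := by
  have := Matrix.posSemidef_conjTranspose_mul_self A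
  rwa [Matrix.conjTranspose_eq_transpose_of_trivial] at this

/-- For PSD `S`, `1 ≤ det (1 + S)`. -/
lemma aux_one_le_det_one_add {S : Matrix (Fin m) (Fin m) ℝ} (hS : S.PosSemidef) :
    (1 : ℝ) ≤ (1 + S).det := by
  have h1 : (1 + S).PosDef := Matrix.PosDef.one.add_posSemidef hS
  have hH := h1.isHermitian
  have hdet : (1 + S).det = ∏ i, hH.eigenvalues i := by
    simpa using hH.det_eq_prod_eigenvalues
  rw [hdet]
  calc (1 : ℝ) = ∏ _i : Fin m, 1 := by simp
    _ ≤ ∏ i, hH.eigenvalues i := by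
        apply Finset.prod_le_prod (by simp)
        intro i _
        have heq := hH.eigenvalues_eq i
        set v : Fin m → ℝ := ⇑(hH.eigenvectorBasis i) with hv
        have hnorm : ‖hH.eigenvectorBasis i‖ = 1 :=
          hH.eigenvectorBasis.orthonormal.1 i
        have hvv : dotProduct (star v) v = 1 := by
          have : (inner ℝ (hH.eigenvectorBasis i) (hH.eigenvectorBasis i) : ℝ)
              = dotProduct (star v) v :=
            EuclideanSpace.inner_eq_star_dotProduct _ _
          rw [← this, real_inner_self_eq_norm_sq, hnorm]; norm_num
        have hSnn : 0 ≤ dotProduct (star v) (S *ᵥ v) := hS.re_dotProduct_nonneg v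
        have key : hH.eigenvalues i
            = dotProduct (star v) v + dotProduct (star v) (S *ᵥ v) := by
          rw [heq, Matrix.add_mulVec, dotProduct_add, Matrix.one_mulVec]
          simp
        rw [key, hvv]
        linarith

/-- For `P` positive definite and `Q` PSD, `det P ≤ det (P + Q)`. -/
lemma aux_det_le_det_add {P Q : Matrix (Fin m) (Fin m) ℝ}
    (hP : P.PosDef) (hQ : Q.PosSemidef) : P.det ≤ (P + Q).det := by
  set R := CFC.sqrt P with hRdef
  have hRps : R.PosSemidef := (CFC.sqrt_nonneg P).posSemidef
  have hRR : R * R = P := CFC.sqrt_mul_sqrt_self P hP.posSemidef.nonneg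
  have hdetP : 0 < P.det := hP.det_pos
  have hdetR : R.det * R.det = P.det := by rw [← Matrix.det_mul, hRR]
  have hRunit : IsUnit R.det := by
    apply isUnit_of_mul_isUnit_left (y := R.det)
    rw [hdetR]; exact (ne_of_gt hdetP).isUnit
  have hRinv : R * R⁻¹ = 1 := Matrix.mul_nonsing_inv R hRunit
  have hRinv' : R⁻¹ * R = 1 := Matrix.nonsing_inv_mul R hRunit
  have hRH : Rᴴ = R := hRps.isHermitian
  set S := R⁻¹ * Q * R⁻¹ with hSdef
  have hSps : S.PosSemidef := by
    have := hQ.conjTranspose_mul_mul_same (B := R⁻¹)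
    rwa [Matrix.conjTranspose_nonsing_inv, hRH] at this
  have hPQ : P + Q = R * (1 + S) * R := by
    rw [Matrix.mul_add, Matrix.add_mul, Matrix.mul_one, hRR, hSdef]
    congr 1
    rw [show R * (R⁻¹ * Q * R⁻¹) * R = (R * R⁻¹) * Q * (R⁻¹ * R) by
      simp only [Matrix.mul_assoc], hRinv, hRinv', Matrix.one_mul, Matrix.mul_one]
  have hle : (1 : ℝ) ≤ (1 + S).det := aux_one_le_det_one_add hSps
  calc P.det = P.det * 1 := by ring
    _ ≤ P.det * (1 + S).det := by nlinarith
    _ = (P + Q).det := by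
        rw [hPQ, Matrix.det_mul, Matrix.det_mul]
        ring_nf
        nlinarith [hdetR]

/-- If `X` is positive definite with `X - 1` PSD, then `1 - X⁻¹` is PSD. -/
lemma aux_one_sub_inv_posSemidef {X : Matrix (Fin m) (Fin m) ℝ}
    (hX : X.PosDef) (h1 : (X - 1).PosSemidef) : ((1 : Matrix (Fin m) (Fin m) ℝ) - X⁻¹).PosSemidef := by
  have hXinv : X⁻¹.PosDef := hX.inv
  set T := CFC.sqrt X⁻¹ with hTdef
  have hTps : T.PosSemidef := (CFC.sqrt_nonneg X⁻¹).posSemidef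
  have hTT : T * T = X⁻¹ := CFC.sqrt_mul_sqrt_self X⁻¹ hXinv.posSemidef.nonneg
  have hTH : Tᴴ = T := hTps.isHermitian
  have hTunit : IsUnit T.det := by
    apply isUnit_of_mul_isUnit_left (y := T.det)
    rw [← Matrix.det_mul, hTT]
    exact (ne_of_gt hXinv.det_pos).isUnit
  have hTinv : T * T⁻¹ = 1 := Matrix.mul_nonsing_inv T hTunit
  have hTinv' : T⁻¹ * T = 1 := Matrix.nonsing_inv_mul T hTunit
  have hXeq : X = T⁻¹ * T⁻¹ := by
    have : X = (X⁻¹)⁻¹ := (Matrix.nonsing_inv_nonsing_inv X (ne_of_gt hX.det_pos).isUnit).symm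
    rw [this, ← hTT, Matrix.mul_inv_rev]
  have key : T * (X - 1) * T = 1 - X⁻¹ := by
    rw [Matrix.mul_sub, Matrix.sub_mul, Matrix.mul_one, hTT, hXeq]
    rw [show T * (T⁻¹ * T⁻¹) * T = (T * T⁻¹) * (T⁻¹ * T) by simp only [Matrix.mul_assoc],
      hTinv, hTinv', Matrix.one_mul]
  have := h1.conjTranspose_mul_mul_same (B := T)
  rwa [hTH, key] at this

/-- Inverse is antitone: for `Λ` posdef and `S` PSD, `Λ⁻¹ - (Λ + S)⁻¹` is PSD. -/
lemma aux_inv_sub_inv_posSemidef {Λ S : Matrix (Fin m) (Fin m) ℝ}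
    (hΛ : Λ.PosDef) (hS : S.PosSemidef) :
    (Λ⁻¹ - (Λ + S)⁻¹).PosSemidef := by
  set M := Λ + S with hMdef
  have hM : M.PosDef := hΛ.add_posSemidef hS
  set R := CFC.sqrt Λ with hRdef
  have hRps : R.PosSemidef := (CFC.sqrt_nonneg Λ).posSemidef
  have hRR : R * R = Λ := CFC.sqrt_mul_sqrt_self Λ hΛ.posSemidef.nonneg
  have hRH : Rᴴ = R := hRps.isHermitian
  have hRunit : IsUnit R.det := by
    apply isUnit_of_mul_isUnit_left (y := R.det)
    rw [← Matrix.det_mul, hRR]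
    exact (ne_of_gt hΛ.det_pos).isUnit
  have hRinv : R * R⁻¹ = 1 := Matrix.mul_nonsing_inv R hRunit
  have hRinv' : R⁻¹ * R = 1 := Matrix.nonsing_inv_mul R hRunit
  have hRiH : (R⁻¹)ᴴ = R⁻¹ := by rw [Matrix.conjTranspose_nonsing_inv, hRH]
  set X := R⁻¹ * M * R⁻¹ with hXdef
  have hXpd : X.PosDef := by
    have h := hM.posSemidef.conjTranspose_mul_mul_same (B := R⁻¹)
    rw [hRiH] at h
    refine Matrix.PosDef.of_dotProduct_mulVec_pos ?_ ?_
    · exact h.isHermitian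
    · intro x hx
      have hx' : R⁻¹ *ᵥ x ≠ 0 := by
        intro hcon
        apply hx
        have : R *ᵥ (R⁻¹ *ᵥ x) = x := by
          rw [Matrix.mulVec_mulVec, hRinv, Matrix.one_mulVec]
        rw [← this, hcon, Matrix.mulVec_zero]
      have h2 := hM.dotProduct_mulVec_pos hx'
      rw [hXdef]
      simpa only [Matrix.star_mulVec, hRiH, Matrix.dotProduct_mulVec,
        Matrix.vecMul_vecMul] using h2
  have hX1 : (X - 1).PosSemidef := by
    have h := hS.conjTranspose_mul_mul_same (B := R⁻¹)
    rw [hRiH] at h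
    have : X - 1 = R⁻¹ * S * R⁻¹ := by
      rw [hXdef, hMdef, Matrix.mul_add, Matrix.add_mul]
      have : R⁻¹ * Λ * R⁻¹ = 1 := by
        rw [← hRR, show R⁻¹ * (R * R) * R⁻¹ = (R⁻¹ * R) * (R * R⁻¹) by
          simp only [Matrix.mul_assoc], hRinv, hRinv', Matrix.one_mul]
      rw [this]; abel
    rwa [this]
  have hkey : ((1 : Matrix (Fin m) (Fin m) ℝ) - X⁻¹).PosSemidef :=
    aux_one_sub_inv_posSemidef hXpd hX1
  have hXinv : X⁻¹ = R * M⁻¹ * R := by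
    rw [hXdef, Matrix.mul_inv_rev, Matrix.mul_inv_rev,
      Matrix.nonsing_inv_nonsing_inv R hRunit, Matrix.mul_assoc]
  have hconj := hkey.conjTranspose_mul_mul_same (B := R⁻¹)
  rw [hRiH] at hconj
  have : R⁻¹ * (1 - X⁻¹) * R⁻¹ = Λ⁻¹ - M⁻¹ := by
    rw [Matrix.mul_sub, Matrix.sub_mul, Matrix.mul_one, hXinv]
    have h1 : R⁻¹ * R⁻¹ = Λ⁻¹ := by rw [← Matrix.mul_inv_rev, hRR]
    have h2 : R⁻¹ * (R * M⁻¹ * R) * R⁻¹ = M⁻¹ := by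
      rw [show R⁻¹ * (R * M⁻¹ * R) * R⁻¹ = (R⁻¹ * R) * M⁻¹ * (R * R⁻¹) by
        simp only [Matrix.mul_assoc], hRinv, hRinv', Matrix.one_mul, Matrix.mul_one]
    rw [h1, h2]
  rwa [this] at hconj

/-- Determinant factorization: det(M + AᵀA) = det M * det(1 + A M⁻¹ Aᵀ). -/
lemma aux_det_add_transpose_mul {k : ℕ} {M : Matrix (Fin m) (Fin m) ℝ}
    (hM : M.PosDef) (A : Matrix (Fin k) (Fin m) ℝ) :
    (M + Aᵀ * A).det = M.det * (1 + A * M⁻¹ * Aᵀ).det := by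
  have hMunit : IsUnit M.det := (ne_of_gt hM.det_pos).isUnit
  have hMinv : M * M⁻¹ = 1 := Matrix.mul_nonsing_inv M hMunit
  have h1 : M + Aᵀ * A = M * (1 + M⁻¹ * Aᵀ * A) := by
    rw [Matrix.mul_add, Matrix.mul_one]
    congr 1
    rw [show M * (M⁻¹ * Aᵀ * A) = (M * M⁻¹) * (Aᵀ * A) by simp only [Matrix.mul_assoc],
      hMinv, Matrix.one_mul]
  rw [h1, Matrix.det_mul]
  congr 1
  have := Matrix.det_one_add_mul_comm (M⁻¹ * Aᵀ) A
  rw [Matrix.mul_assoc] at this ⊢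
  rw [this, ← Matrix.mul_assoc]

end Aux

/-- sandwich property,
ln det(Λ + AₛᵀAₛ) ≤ ln det(Λ + AₛᵀAₛ + AᵦᵀAᵦ)
  ≤ ln det(Λ + AₛᵀAₛ) + ln det(Λ + AᵦᵀAᵦ) - ln det(Λ). -/
theorem logdet_sandwich {n p q : ℕ}
    (Λ : Matrix (Fin n) (Fin n) ℝ) (hΛ : Λ.PosDef)
    (As : Matrix (Fin p) (Fin n) ℝ) (Ab : Matrix (Fin q) (Fin n) ℝ) :
    Real.log (Λ + Asᵀ * As).det ≤ Real.log (Λ + Asᵀ * As + Abᵀ * Ab).det ∧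
      Real.log (Λ + Asᵀ * As + Abᵀ * Ab).det ≤
        Real.log (Λ + Asᵀ * As).det + Real.log (Λ + Abᵀ * Ab).det -
          Real.log Λ.det := by
  have hS : (Asᵀ * As).PosSemidef := aux_posSemidef_transpose_mul_self As
  have hB : (Abᵀ * Ab).PosSemidef := aux_posSemidef_transpose_mul_self Ab
  set M := Λ + Asᵀ * As with hMdef
  have hM : M.PosDef := hΛ.add_posSemidef hS
  have hMB : (M + Abᵀ * Ab).PosDef := hM.add_posSemidef hB
  have hΛB : (Λ + Abᵀ * Ab).PosDef := hΛ.add_posSemidef hB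
  constructor
  · exact Real.log_le_log hM.det_pos (aux_det_le_det_add hM hB)
  · -- factorizations
    have hfM : (M + Abᵀ * Ab).det = M.det * (1 + Ab * M⁻¹ * Abᵀ).det :=
      aux_det_add_transpose_mul hM Ab
    have hfΛ : (Λ + Abᵀ * Ab).det = Λ.det * (1 + Ab * Λ⁻¹ * Abᵀ).det :=
      aux_det_add_transpose_mul hΛ Ab
    have hpd1 : (1 + Ab * M⁻¹ * Abᵀ).PosDef := by
      have h := hM.inv.posSemidef.mul_mul_conjTranspose_same (B := Ab)
      rw [Matrix.conjTranspose_eq_transpose_of_trivial] at h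
      exact Matrix.PosDef.one.add_posSemidef h
    have hpd2 : (1 + Ab * Λ⁻¹ * Abᵀ).PosDef := by
      have h := hΛ.inv.posSemidef.mul_mul_conjTranspose_same (B := Ab)
      rw [Matrix.conjTranspose_eq_transpose_of_trivial] at h
      exact Matrix.PosDef.one.add_posSemidef h
    -- det(1 + Ab M⁻¹ Abᵀ) ≤ det(1 + Ab Λ⁻¹ Abᵀ)
    have hdiff : (Λ⁻¹ - M⁻¹).PosSemidef := aux_inv_sub_inv_posSemidef hΛ hS
    have hQ : (Ab * (Λ⁻¹ - M⁻¹) * Abᵀ).PosSemidef := by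
      have h := hdiff.mul_mul_conjTranspose_same (B := Ab)
      rwa [Matrix.conjTranspose_eq_transpose_of_trivial] at h
    have hsum : (1 + Ab * Λ⁻¹ * Abᵀ)
        = (1 + Ab * M⁻¹ * Abᵀ) + Ab * (Λ⁻¹ - M⁻¹) * Abᵀ := by
      rw [Matrix.mul_sub, Matrix.sub_mul]
      abel
    have hdetle : (1 + Ab * M⁻¹ * Abᵀ).det ≤ (1 + Ab * Λ⁻¹ * Abᵀ).det := by
      rw [hsum]
      exact aux_det_le_det_add hpd1 hQ
    have hlog1 : Real.log (M + Abᵀ * Ab).det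
        = Real.log M.det + Real.log (1 + Ab * M⁻¹ * Abᵀ).det := by
      rw [hfM, Real.log_mul (ne_of_gt hM.det_pos) (ne_of_gt hpd1.det_pos)]
    have hlog2 : Real.log (Λ + Abᵀ * Ab).det
        = Real.log Λ.det + Real.log (1 + Ab * Λ⁻¹ * Abᵀ).det := by
      rw [hfΛ, Real.log_mul (ne_of_gt hΛ.det_pos) (ne_of_gt hpd2.det_pos)]
    have hloge : Real.log (1 + Ab * M⁻¹ * Abᵀ).det
        ≤ Real.log (1 + Ab * Λ⁻¹ * Abᵀ).det :=
      Real.log_le_log hpd1.det_pos hdetle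
    rw [hlog1, hlog2]
    linarith
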